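/- Let n ≥ 3 be an integer. The function y ↦ y²·((n−1)·coth²(y) − 2·csch²(y)) is strictly increasing on (0, ∞), where coth(y) = cosh(y)/sinh(y) and csch(y) = 1/sinh(y). -/
import Mathlib

open Real Set

lemma aux_strictMonoOn_mul_coth :
    StrictMonoOn (fun y : ℝ => y * Real.cosh y / Real.sinh y) (Set.Ioi 0) := by
  apply strictMonoOn_of_deriv_pos (convex_Ioi 0)
  · exact ContinuousOn.div
      ((continuous_id.mul Real.continuous_cosh).continuousOn)
      Real.continuous_sinh.continuousOn
      (fun x hx => ne_of_gt (Real.sinh_pos_iff.2 hx))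
  · intro x hx
    rw [interior_Ioi] at hx
    have hx0 : (0 : ℝ) < x := hx
    have hs : Real.sinh x ≠ 0 := ne_of_gt (Real.sinh_pos_iff.2 hx0)
    have h1 : HasDerivAt (fun y : ℝ => y * Real.cosh y)
        (1 * Real.cosh x + x * Real.sinh x) x :=
      (hasDerivAt_id x).mul (Real.hasDerivAt_cosh x)
    have h2 : HasDerivAt (fun y : ℝ => y * Real.cosh y / Real.sinh y)
        (((1 * Real.cosh x + x * Real.sinh x) * Real.sinh x -
          x * Real.cosh x * Real.cosh x) / Real.sinh x ^ 2) x :=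
      h1.div (Real.hasDerivAt_sinh x) hs
    rw [h2.deriv]
    have hnum : (1 * Real.cosh x + x * Real.sinh x) * Real.sinh x -
        x * Real.cosh x * Real.cosh x
        = Real.cosh x * Real.sinh x - x := by
      have := Real.cosh_sq_sub_sinh_sq x
      nlinarith [this]
    rw [hnum]
    have hlt : x < Real.cosh x * Real.sinh x := by
      have h3 : x < Real.sinh x := Real.self_lt_sinh_iff.2 hx0
      have h4 : Real.sinh x ≤ Real.cosh x * Real.sinh x := by
        nlinarith [Real.one_le_cosh x, Real.sinh_pos_iff.2 hx0]
      linarith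
    have hs2 : 0 < Real.sinh x ^ 2 := by positivity
    exact div_pos (by linarith) hs2

theorem sq_mul_coth_csch_strictMonoOn (n : ℕ) (hn : 3 ≤ n) :
    StrictMonoOn
      (fun y : ℝ => y ^ 2 *
        ((n - 1 : ℝ) * (Real.cosh y / Real.sinh y) ^ 2
          - 2 * (1 / Real.sinh y) ^ 2))
      (Set.Ioi 0) := by
  have hn3 : (0 : ℝ) ≤ (n : ℝ) - 3 := by
    have : (3 : ℝ) ≤ (n : ℝ) := by exact_mod_cast hn
    linarith
  have key : ∀ y ∈ Set.Ioi (0:ℝ),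
      y ^ 2 * ((n - 1 : ℝ) * (Real.cosh y / Real.sinh y) ^ 2
          - 2 * (1 / Real.sinh y) ^ 2)
      = ((n : ℝ) - 3) * (y * Real.cosh y / Real.sinh y) ^ 2 + 2 * y ^ 2 := by
    intro y hy
    have hs : Real.sinh y ≠ 0 := ne_of_gt (Real.sinh_pos_iff.2 hy)
    have hc : Real.cosh y ^ 2 = Real.sinh y ^ 2 + 1 := (Real.cosh_sq' y).trans (add_comm _ _)
    field_simp
    nlinarith [hc]
  intro a ha b hb hab
  simp only
  rw [key a ha, key b hb]
  have hga : 0 < a * Real.cosh a / Real.sinh a :=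
    div_pos (mul_pos (Set.mem_Ioi.mp ha) (Real.cosh_pos a)) (Real.sinh_pos_iff.2 ha)
  have hmono := aux_strictMonoOn_mul_coth ha hb hab
  have hsq : (a * Real.cosh a / Real.sinh a) ^ 2 ≤
      (b * Real.cosh b / Real.sinh b) ^ 2 := by
    apply pow_le_pow_left₀ (le_of_lt hga) (le_of_lt hmono)
  have h1 : ((n : ℝ) - 3) * (a * Real.cosh a / Real.sinh a) ^ 2 ≤
      ((n : ℝ) - 3) * (b * Real.cosh b / Real.sinh b) ^ 2 :=
    mul_le_mul_of_nonneg_left hsq hn3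
  have h2 : 2 * a ^ 2 < 2 * b ^ 2 := by
    have ha0 : (0:ℝ) < a := ha
    nlinarith [Set.mem_Ioi.mp ha, hab]
  linarith
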